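/- Let $n_1, n_2, n_3, m_1, m_2, m_3$ be integers with $n_1 + n_2 + n_3 + m_1 + m_2 + m_3 = 0$, $n_3 + m_3 \ne 0$, $|n_3| \ge 576$, and $4 n_1^2 \le |n_3|$, $4 n_2^2 \le |n_3|$, $4 m_1^2 \le |n_3|$, $4 m_2^2 \le |n_3|$. Then $\left| \Phi(n_1,n_2,n_3) + \Phi(m_1,m_2,m_3) \right| \ge \tfrac{1}{2} n_3^2$, where $\Phi(k_1,k_2,k_3) = (k_1+k_2+k_3)^3 - k_1^3 - k_2^3 - k_3^3$. -/
import Mathlib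


/-- The resonance function `Φ(k₁,k₂,k₃) = (k₁+k₂+k₃)³ - k₁³ - k₂³ - k₃³`. -/
def Phi (k₁ k₂ k₃ : ℤ) : ℤ := (k₁ + k₂ + k₃) ^ 3 - k₁ ^ 3 - k₂ ^ 3 - k₃ ^ 3

lemma aux48 (k N : ℤ) (hN : 576 ≤ N) (h : 4 * k ^ 2 ≤ N) : 48 * |k| ≤ N := by
  rcases le_or_gt (|k|) 12 with h' | h'
  · linarith
  · have h13 : 13 ≤ |k| := h'
    nlinarith [sq_abs k, abs_nonneg k]

theorem stmt5 (n₁ n₂ n₃ m₁ m₂ m₃ : ℤ)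
    (hsum : n₁ + n₂ + n₃ + m₁ + m₂ + m₃ = 0) (hnm : n₃ + m₃ ≠ 0)
    (hbig : 576 ≤ |n₃|)
    (h1 : 4 * n₁ ^ 2 ≤ |n₃|) (h2 : 4 * n₂ ^ 2 ≤ |n₃|)
    (h3 : 4 * m₁ ^ 2 ≤ |n₃|) (h4 : 4 * m₂ ^ 2 ≤ |n₃|) :
    ((1 : ℝ) / 2) * (n₃ : ℝ) ^ 2 ≤ |((Phi n₁ n₂ n₃ + Phi m₁ m₂ m₃ : ℤ) : ℝ)| := by
  have hm3 : m₃ = -(n₁ + n₂ + n₃ + m₁ + m₂) := by linarith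
  subst hm3
  set a : ℤ := n₁ + n₂ + m₁ + m₂ with hadef
  set S : ℤ := Phi n₁ n₂ n₃ + Phi m₁ m₂ (-(n₁ + n₂ + n₃ + m₁ + m₂)) with hSdef
  have hS : S = 3 * n₃ ^ 2 * a + (3 * n₃ * a ^ 2 + a ^ 3
      - n₁ ^ 3 - n₂ ^ 3 - m₁ ^ 3 - m₂ ^ 3) := by
    simp only [hSdef, hadef, Phi]; ring
  have hane : a ≠ 0 := by
    intro h
    apply hnm
    have : n₁ + n₂ + m₁ + m₂ = 0 := h
    linarith
  have hA1 : 1 ≤ |a| := Int.one_le_abs hane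
  have hb1 := aux48 n₁ |n₃| hbig h1
  have hb2 := aux48 n₂ |n₃| hbig h2
  have hb3 := aux48 m₁ |n₃| hbig h3
  have hb4 := aux48 m₂ |n₃| hbig h4
  have habs : |a| ≤ |n₁| + |n₂| + |m₁| + |m₂| := by
    have t1 : |n₁ + n₂ + m₁ + m₂| ≤ |n₁ + n₂ + m₁| + |m₂| := abs_add_le _ _
    have t2 : |n₁ + n₂ + m₁| ≤ |n₁ + n₂| + |m₁| := abs_add_le _ _
    have t3 : |n₁ + n₂| ≤ |n₁| + |n₂| := abs_add_le _ _
    calc |a| = |n₁ + n₂ + m₁ + m₂| := by rw [hadef]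
    _ ≤ _ := by linarith
  have hA12 : 12 * |a| ≤ |n₃| := by linarith
  -- cube bounds
  have cube : ∀ k : ℤ, 4 * k ^ 2 ≤ |n₃| → 48 * |k| ≤ |n₃| → 192 * |k| ^ 3 ≤ n₃ ^ 2 := by
    intro k hk hk'
    have h0 : (4 * k ^ 2) * (48 * |k|) ≤ |n₃| * |n₃| :=
      mul_le_mul hk hk' (by positivity) (abs_nonneg n₃)
    calc 192 * |k| ^ 3 = (4 * k ^ 2) * (48 * |k|) := by rw [← sq_abs k]; ring
      _ ≤ |n₃| * |n₃| := h0
      _ = n₃ ^ 2 := by rw [← sq_abs n₃]; ring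
  have c1 := cube n₁ h1 hb1
  have c2 := cube n₂ h2 hb2
  have c3 := cube m₁ h3 hb3
  have c4 := cube m₂ h4 hb4
  -- triangle inequality
  have hRle : |3 * n₃ * a ^ 2 + a ^ 3 - n₁ ^ 3 - n₂ ^ 3 - m₁ ^ 3 - m₂ ^ 3|
      ≤ 3 * |n₃| * a ^ 2 + |a| ^ 3 + |n₁| ^ 3 + |n₂| ^ 3 + |m₁| ^ 3 + |m₂| ^ 3 := by
    have e1 : |3 * n₃ * a ^ 2| = 3 * |n₃| * a ^ 2 := by
      rw [abs_mul, abs_mul, abs_pow, sq_abs]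
      norm_num
    have e2 : |a ^ 3| = |a| ^ 3 := abs_pow a 3
    calc |3 * n₃ * a ^ 2 + a ^ 3 - n₁ ^ 3 - n₂ ^ 3 - m₁ ^ 3 - m₂ ^ 3|
        ≤ |3 * n₃ * a ^ 2 + a ^ 3 - n₁ ^ 3 - n₂ ^ 3 - m₁ ^ 3| + |m₂ ^ 3| := abs_sub _ _
      _ ≤ |3 * n₃ * a ^ 2 + a ^ 3 - n₁ ^ 3 - n₂ ^ 3| + |m₁ ^ 3| + |m₂ ^ 3| := by
          have := abs_sub (3 * n₃ * a ^ 2 + a ^ 3 - n₁ ^ 3 - n₂ ^ 3) (m₁ ^ 3); linarith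
      _ ≤ |3 * n₃ * a ^ 2 + a ^ 3 - n₁ ^ 3| + |n₂ ^ 3| + |m₁ ^ 3| + |m₂ ^ 3| := by
          have := abs_sub (3 * n₃ * a ^ 2 + a ^ 3 - n₁ ^ 3) (n₂ ^ 3); linarith
      _ ≤ |3 * n₃ * a ^ 2 + a ^ 3| + |n₁ ^ 3| + |n₂ ^ 3| + |m₁ ^ 3| + |m₂ ^ 3| := by
          have := abs_sub (3 * n₃ * a ^ 2 + a ^ 3) (n₁ ^ 3); linarith
      _ ≤ |3 * n₃ * a ^ 2| + |a ^ 3| + |n₁ ^ 3| + |n₂ ^ 3| + |m₁ ^ 3| + |m₂ ^ 3| := by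
          have := abs_add_le (3 * n₃ * a ^ 2) (a ^ 3); linarith
      _ = _ := by rw [e1, e2, abs_pow, abs_pow, abs_pow, abs_pow]
  have hbigabs : |3 * n₃ ^ 2 * a| = 3 * n₃ ^ 2 * |a| := by
    rw [abs_mul, abs_mul, abs_pow, sq_abs]
    norm_num
  have htri : 3 * n₃ ^ 2 * |a| ≤ |S| + (3 * |n₃| * a ^ 2 + |a| ^ 3
      + |n₁| ^ 3 + |n₂| ^ 3 + |m₁| ^ 3 + |m₂| ^ 3) := by
    have : 3 * n₃ ^ 2 * a = S - (3 * n₃ * a ^ 2 + a ^ 3 - n₁ ^ 3 - n₂ ^ 3 - m₁ ^ 3 - m₂ ^ 3) := by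
      rw [hS]; ring
    calc 3 * n₃ ^ 2 * |a| = |3 * n₃ ^ 2 * a| := hbigabs.symm
      _ ≤ |S| + |3 * n₃ * a ^ 2 + a ^ 3 - n₁ ^ 3 - n₂ ^ 3 - m₁ ^ 3 - m₂ ^ 3| := by
          rw [this]; exact abs_sub _ _
      _ ≤ _ := by linarith
  -- bounds on intermediate terms
  have p1 : 72 * |n₃| * a ^ 2 ≤ 6 * n₃ ^ 2 * |a| := by
    have h0 := mul_le_mul_of_nonneg_left hA12
      (mul_nonneg (mul_nonneg (by norm_num : (0:ℤ) ≤ 6) (abs_nonneg n₃)) (abs_nonneg a))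
    calc 72 * |n₃| * a ^ 2 = 6 * |n₃| * |a| * (12 * |a|) := by rw [← sq_abs a]; ring
      _ ≤ 6 * |n₃| * |a| * |n₃| := h0
      _ = 6 * n₃ ^ 2 * |a| := by rw [← sq_abs n₃]; ring
  have q : 144 * a ^ 2 ≤ n₃ ^ 2 := by
    have h0 : (12 * |a|) * (12 * |a|) ≤ |n₃| * |n₃| :=
      mul_self_le_mul_self (by positivity) hA12
    calc 144 * a ^ 2 = (12 * |a|) * (12 * |a|) := by rw [← sq_abs a]; ring
      _ ≤ |n₃| * |n₃| := h0
      _ = n₃ ^ 2 := by rw [← sq_abs n₃]; ring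
  have p2 : 144 * |a| ^ 3 ≤ n₃ ^ 2 * |a| := by
    have h0 := mul_le_mul_of_nonneg_right q (abs_nonneg a)
    calc 144 * |a| ^ 3 = 144 * a ^ 2 * |a| := by rw [← sq_abs a]; ring
      _ ≤ n₃ ^ 2 * |a| := h0
  have pA : n₃ ^ 2 ≤ n₃ ^ 2 * |a| := by
    simpa using mul_le_mul_of_nonneg_left hA1 (sq_nonneg n₃)
  -- final integer bound
  have main : n₃ ^ 2 ≤ 2 * |S| := by
    clear_value a S
    have hP : 0 ≤ n₃ ^ 2 := sq_nonneg n₃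
    have hT : 0 ≤ |S| := abs_nonneg S
    linarith
  -- transfer to ℝ
  have mainR : ((n₃ : ℝ)) ^ 2 ≤ 2 * |((S : ℤ) : ℝ)| := by
    have : ((n₃ ^ 2 : ℤ) : ℝ) ≤ ((2 * |S| : ℤ) : ℝ) := by exact_mod_cast main
    push_cast [Int.cast_abs] at this
    linarith
  rw [hSdef] at mainR
  linarith
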